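/- Let a and b be positive real numbers and let n be a positive integer. Then Σ over positive integers d of d^{−(a+b+2)} · Σ over pairs (e₁, e₂) with 1 ≤ e₁, e₂ ≤ d and e₁e₂ ≡ n (mod d) of ζ(a+1, e₂/d) converges absolutely and equals [ζ(a+1)·ζ(b+1)/ζ(a+b+2)] · σ_{a+b+1}(n) / n^{a+b+1}. -/

import Mathlib

open Finset

/-- `σ_c(n) = ∑_{d ∣ n} d^c` for real `c`. -/
noncomputable def sigmaR (c : ℝ) (n : ℕ) : ℝ := ∑ d ∈ n.divisors, (d : ℝ) ^ c

/-- The Hurwitz zeta function `ζ(s, x)` for `x ∈ (0, 1]` (analytic continuation of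
`∑_{n ≥ 0} (n + x)^{-s}`); note that `ζ(s, 1) = ζ(s)`. -/
noncomputable def hzeta (s : ℂ) (x : ℝ) : ℂ := HurwitzZeta.hurwitzZeta (x : UnitAddCircle) s

namespace Stmt8Aux

/-- Count of elements of `[1, g*q]` in a fixed residue class mod `q`. -/
lemma count_modEq_Icc (g q c : ℕ) (hq : 0 < q) :
    ((Finset.Icc 1 (g * q)).filter (fun e => e ≡ c [MOD q])).card = g := by
  classical
  set c' : ℕ := if c % q = 0 then q else c % q with hc'def
  have hc'1 : 1 ≤ c' := by
    rcases eq_or_ne (c % q) 0 with h | h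
    · simp [hc'def, h]; omega
    · simp [hc'def, h]; omega
  have hc'q : c' ≤ q := by
    rcases eq_or_ne (c % q) 0 with h | h
    · simp [hc'def, h]
    · simp only [hc'def, h, if_neg, if_false]
      exact le_of_lt (Nat.mod_lt _ hq)
  have hc'c : c' ≡ c [MOD q] := by
    rcases eq_or_ne (c % q) 0 with h | h
    · simp only [hc'def, h, if_pos]
      show q % q = c % q
      simp [Nat.mod_self, h.symm]
    · simp only [hc'def, h, if_neg, if_false]
      exact Nat.mod_modEq c q
  have himg : (Finset.Icc 1 (g * q)).filter (fun e => e ≡ c [MOD q])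
      = (Finset.range g).image (fun j => j * q + c') := by
    ext e
    simp only [Finset.mem_filter, Finset.mem_Icc, Finset.mem_image, Finset.mem_range]
    constructor
    · rintro ⟨⟨he1, he2⟩, hec⟩
      have hec' : e % q = c' % q := (hec.trans hc'c.symm : Nat.ModEq q e c')
      have hce : c' ≤ e := by
        by_contra hlt
        push_neg at hlt
        have heq : e % q = e := Nat.mod_eq_of_lt (lt_of_lt_of_le hlt hc'q)
        rcases lt_or_eq_of_le hc'q with h2 | h2
        · have : c' % q = c' := Nat.mod_eq_of_lt h2
          omega
        · have : c' % q = 0 := by rw [h2]; exact Nat.mod_self q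
          omega
      have hdvd : q ∣ e - c' := (Nat.modEq_iff_dvd' hce).mp (hec.trans hc'c.symm).symm
      obtain ⟨j, hj⟩ := hdvd
      rw [Nat.mul_comm] at hj
      refine ⟨j, ?_, by omega⟩
      have hjq : j * q < g * q := by omega
      exact Nat.lt_of_mul_lt_mul_right hjq
    · rintro ⟨j, hjg, rfl⟩
      refine ⟨⟨by omega, ?_⟩, ?_⟩
      · calc j * q + c' ≤ j * q + q := by omega
          _ = (j + 1) * q := by ring
          _ ≤ g * q := Nat.mul_le_mul_right _ (by omega)
      · have h1 : j * q + c' ≡ c' [MOD q] := by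
          show (j * q + c') % q = c' % q
          rw [add_comm, Nat.add_mul_mod_self_right]
        exact h1.trans hc'c
  rw [himg, Finset.card_image_of_injective _ ?_, Finset.card_range]
  intro x y h
  simp only at h
  have : x * q = y * q := by omega
  exact Nat.eq_of_mul_eq_mul_right hq this

/-- Number of solutions `e ∈ [1,d]` of `e * m ≡ n (mod d)`. -/
lemma count_solutions (n d m : ℕ) (hd : 0 < d) :
    ((Finset.Icc 1 d).filter (fun e => e * m ≡ n [MOD d])).card
      = if Nat.gcd m d ∣ n then Nat.gcd m d else 0 := by
  classical
  set g := Nat.gcd m d with hg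
  have hg0 : 0 < g := Nat.gcd_pos_of_pos_right m hd
  set q := d / g with hqdef
  have hgd : g ∣ d := Nat.gcd_dvd_right m d
  have hdgq : d = g * q := (Nat.mul_div_cancel' hgd).symm
  have hq0 : 0 < q := Nat.div_pos (Nat.le_of_dvd hd hgd) hg0
  set m' := m / g with hm'def
  have hgm : g ∣ m := Nat.gcd_dvd_left m d
  have hmm : m = g * m' := (Nat.mul_div_cancel' hgm).symm
  have hcop : Nat.Coprime m' q := Nat.coprime_div_gcd_div_gcd hg0
  by_cases hdvd : g ∣ n
  · obtain ⟨n', hn'⟩ := hdvd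
    obtain ⟨m'', hm''⟩ : ∃ m'', m' * m'' ≡ 1 [MOD q] := by
      rcases eq_or_lt_of_le (Nat.one_le_iff_ne_zero.mpr hq0.ne') with h1 | h1
      · exact ⟨1, by rw [← h1]; exact Nat.modEq_one⟩
      · obtain ⟨b, -, hb⟩ := Nat.exists_mul_mod_eq_one_of_coprime hcop h1
        exact ⟨b, by
          show (m' * b) % q = 1 % q
          rw [hb, Nat.mod_eq_of_lt h1]⟩
    have hiff : ∀ e, (e * m ≡ n [MOD d]) ↔ (e ≡ n' * m'' [MOD q]) := by
      intro e
      rw [hmm, hn', hdgq, show e * (g * m') = g * (e * m') by ring,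
        Nat.ModEq.mul_left_cancel_iff' hg0.ne']
      constructor
      · intro h
        calc e = e * 1 := (mul_one e).symm
          _ ≡ e * (m' * m'') [MOD q] := (Nat.ModEq.mul_left e hm'').symm
          _ = (e * m') * m'' := by ring
          _ ≡ n' * m'' [MOD q] := h.mul_right m''
      · intro h
        calc e * m' ≡ (n' * m'') * m' [MOD q] := h.mul_right m'
          _ = n' * (m' * m'') := by ring
          _ ≡ n' * 1 [MOD q] := Nat.ModEq.mul_left n' hm''
          _ = n' := mul_one n'
    have hfe : (Finset.Icc 1 d).filter (fun e => e * m ≡ n [MOD d])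
        = (Finset.Icc 1 d).filter (fun e => e ≡ n' * m'' [MOD q]) := by
      apply Finset.filter_congr
      intro e _
      simpa using hiff e
    rw [hfe, if_pos ⟨n', hn'⟩, hdgq, count_modEq_Icc g q _ hq0]
  · rw [if_neg hdvd, Finset.card_eq_zero, Finset.filter_eq_empty_iff]
    intro e _
    intro hmod
    apply hdvd
    have h1 : (d : ℤ) ∣ (n : ℤ) - (e * m : ℕ) := hmod.dvd
    have h2 : (g : ℤ) ∣ (n : ℤ) - (e * m : ℕ) :=
      dvd_trans (Int.natCast_dvd_natCast.mpr hgd) h1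
    have h3 : (g : ℤ) ∣ ((e * m : ℕ) : ℤ) := by
      push_cast
      exact Dvd.dvd.mul_left (Int.natCast_dvd_natCast.mpr hgm) e
    have h4 : (g : ℤ) ∣ (n : ℤ) := by
      have := dvd_add h2 h3
      simpa using this
    exact_mod_cast h4


lemma summable_rpow {c : ℝ} (hc : 1 < c) : Summable (fun m : ℕ => (m : ℝ) ^ (-c)) :=
  Real.summable_nat_rpow.mpr (by linarith)

noncomputable def zr (c : ℝ) : ℝ := ∑' m : ℕ, (m : ℝ) ^ (-c)

lemma zr_nonneg (c : ℝ) : 0 ≤ zr c :=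
  tsum_nonneg (fun m => Real.rpow_nonneg (Nat.cast_nonneg m) _)

lemma one_le_zr {c : ℝ} (hc : 1 < c) : 1 ≤ zr c := by
  have h := Summable.le_tsum (summable_rpow hc) 1 (fun j _ => Real.rpow_nonneg (Nat.cast_nonneg j) _)
  simpa [zr] using h

lemma zr_pos {c : ℝ} (hc : 1 < c) : 0 < zr c := lt_of_lt_of_le one_pos (one_le_zr hc)

lemma zeta_eq_zr {c : ℝ} (hc : 1 < c) : riemannZeta ((c : ℝ) : ℂ) = ((zr c : ℝ) : ℂ) := by
  rw [zeta_eq_tsum_one_div_nat_cpow (by simpa using hc), zr, Complex.ofReal_tsum]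
  apply tsum_congr
  intro m
  rcases Nat.eq_zero_or_pos m with rfl | hm
  · rw [Nat.cast_zero, Complex.zero_cpow (by exact_mod_cast (by linarith : c ≠ 0)),
      Nat.cast_zero, Real.zero_rpow (by linarith : -c ≠ 0)]
    simp
  · have hm0 : (0:ℝ) < m := by exact_mod_cast hm
    rw [show ((m:ℕ):ℂ) = (((m:ℕ):ℝ):ℂ) by push_cast; ring, ← Complex.ofReal_cpow hm0.le,
      Real.rpow_neg hm0.le]
    rw [← Complex.ofReal_one, ← Complex.ofReal_div]
    norm_cast
    rw [one_div]

lemma tsum_prod_mul {ι κ : Type*} (f : ι → ℝ) (g : κ → ℝ) (hf : Summable f) (hg : Summable g)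
    (hf0 : ∀ i, 0 ≤ f i) (hg0 : ∀ j, 0 ≤ g j) :
    ∑' p : ι × κ, f p.1 * g p.2 = (∑' i, f i) * (∑' j, g j) := by
  rw [Summable.tsum_prod' (hf.mul_of_nonneg hg hf0 hg0) (fun i => (hg.mul_left (f i)))]
  simp_rw [tsum_mul_left]
  rw [tsum_mul_right]

lemma key_reindex (α β : ℝ) (hα : 0 < α) (hβ : 0 < β) (w : ℕ → ℝ) :
    ∑' p : ℕ × ℕ, ((p.1 : ℝ) ^ (-α) * (p.2 : ℝ) ^ (-β) * w (Nat.gcd p.1 p.2))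
      = ∑' q : ℕ × ℕ × ℕ,
          (((q.1 : ℝ) ^ (-(α + β)) * w q.1) *
            (if Nat.Coprime q.2.1 q.2.2 then (q.2.1 : ℝ) ^ (-α) * (q.2.2 : ℝ) ^ (-β) else 0)) := by
  classical
  have hαβ : -(α + β) ≠ 0 := by linarith
  have hposof : ∀ (t : ℕ) (c : ℝ), c ≠ 0 → ((t : ℝ) ^ c ≠ 0) → 0 < t := by
    intro t c hcne ht
    rcases Nat.eq_zero_or_pos t with rfl | h
    · exact absurd (by rw [Nat.cast_zero, Real.zero_rpow hcne]) ht
    · exact h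
  -- facts about support of the RHS function
  have facts : ∀ q : ℕ × ℕ × ℕ,
      (((q.1 : ℝ) ^ (-(α + β)) * w q.1) *
        (if Nat.Coprime q.2.1 q.2.2 then (q.2.1 : ℝ) ^ (-α) * (q.2.2 : ℝ) ^ (-β) else 0)) ≠ 0 →
      0 < q.1 ∧ 0 < q.2.1 ∧ 0 < q.2.2 ∧ Nat.Coprime q.2.1 q.2.2 ∧ w q.1 ≠ 0 := by
    rintro ⟨g, x, y⟩ hq
    by_cases hc : Nat.Coprime x y
    · rw [if_pos hc, mul_ne_zero_iff, mul_ne_zero_iff, mul_ne_zero_iff] at hq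
      obtain ⟨⟨h1, h2⟩, h3, h4⟩ := hq
      exact ⟨hposof _ _ hαβ h1, hposof _ _ (by linarith : -α ≠ 0) h3,
        hposof _ _ (by linarith : -β ≠ 0) h4, hc, h2⟩
    · simp [hc] at hq
  apply tsum_eq_tsum_of_ne_zero_bij
    (i := fun q => ((q : ℕ × ℕ × ℕ).1 * (q : ℕ × ℕ × ℕ).2.1,
                    (q : ℕ × ℕ × ℕ).1 * (q : ℕ × ℕ × ℕ).2.2))
  · -- injectivity
    rintro ⟨⟨g, x, y⟩, hq⟩ ⟨⟨g', x', y'⟩, hq'⟩ h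
    obtain ⟨hg, hx, hy, hc, -⟩ := facts _ hq
    obtain ⟨hg', hx', hy', hc', -⟩ := facts _ hq'
    simp only [Prod.mk.injEq] at h
    obtain ⟨h1, h2⟩ := h
    have hgg : g = g' := by
      have e1 : Nat.gcd (g * x) (g * y) = g := by
        rw [Nat.gcd_mul_left, hc, mul_one]
      have e2 : Nat.gcd (g' * x') (g' * y') = g' := by
        rw [Nat.gcd_mul_left, hc', mul_one]
      rw [← e1, ← e2, h1, h2]
    subst hgg
    have hxx : x = x' := Nat.eq_of_mul_eq_mul_left hg h1
    have hyy : y = y' := Nat.eq_of_mul_eq_mul_left hg h2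
    simp [hxx, hyy]
  · -- support of LHS is in the range
    rintro ⟨dd, mm⟩ hp
    simp only [Function.mem_support] at hp
    rw [mul_ne_zero_iff, mul_ne_zero_iff] at hp
    obtain ⟨⟨h1, h2⟩, h3⟩ := hp
    have hdd : 0 < dd := hposof _ _ (by linarith : -α ≠ 0) h1
    have hmm : 0 < mm := hposof _ _ (by linarith : -β ≠ 0) h2
    set g := Nat.gcd dd mm with hgdef
    have hg0 : 0 < g := Nat.gcd_pos_of_pos_left mm hdd
    have hcop : Nat.Coprime (dd / g) (mm / g) := Nat.coprime_div_gcd_div_gcd hg0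
    have hdd0 : 0 < dd / g := Nat.div_pos (Nat.le_of_dvd hdd (Nat.gcd_dvd_left dd mm)) hg0
    have hmm0 : 0 < mm / g := Nat.div_pos (Nat.le_of_dvd hmm (Nat.gcd_dvd_right dd mm)) hg0
    refine ⟨⟨(g, dd / g, mm / g), ?_⟩, ?_⟩
    · simp only [Function.mem_support]
      rw [if_pos hcop]
      apply mul_ne_zero (mul_ne_zero ?_ h3) (mul_ne_zero ?_ ?_)
      · exact ne_of_gt (Real.rpow_pos_of_pos (by exact_mod_cast hg0) _)
      · exact ne_of_gt (Real.rpow_pos_of_pos (by exact_mod_cast hdd0) _)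
      · exact ne_of_gt (Real.rpow_pos_of_pos (by exact_mod_cast hmm0) _)
    · simp only
      rw [Nat.mul_div_cancel' (Nat.gcd_dvd_left dd mm),
        Nat.mul_div_cancel' (Nat.gcd_dvd_right dd mm)]
  · -- value compatibility
    rintro ⟨⟨g, x, y⟩, hq⟩
    obtain ⟨hg, hx, hy, hc, -⟩ := facts _ hq
    simp only
    have hgcd : Nat.gcd (g * x) (g * y) = g := by
      rw [Nat.gcd_mul_left, hc, mul_one]
    rw [hgcd]
    have hgr : (0:ℝ) < (g:ℝ) := by exact_mod_cast hg
    have hsplit : ((g:ℝ) * x) ^ (-α) * ((g:ℝ) * y) ^ (-β)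
        = ((g:ℝ) ^ (-(α+β)) * ((x:ℝ) ^ (-α) * (y:ℝ) ^ (-β))) := by
      rw [Real.mul_rpow hgr.le (Nat.cast_nonneg x), Real.mul_rpow hgr.le (Nat.cast_nonneg y),
        show -(α + β) = -α + -β by ring, Real.rpow_add hgr]
      ring
    push_cast
    rw [if_pos hc]
    calc ((g:ℝ) * x) ^ (-α) * ((g:ℝ) * y) ^ (-β) * w g
        = ((g:ℝ) ^ (-(α+β)) * ((x:ℝ) ^ (-α) * (y:ℝ) ^ (-β))) * w g := by rw [hsplit]
      _ = (g:ℝ) ^ (-(α+β)) * w g * ((x:ℝ) ^ (-α) * (y:ℝ) ^ (-β)) := by ring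


lemma master (α β : ℝ) (hα : 1 < α) (hβ : 1 < β) (n : ℕ) (hn : 0 < n) :
    ∑' p : ℕ × ℕ, ((p.1 : ℝ) ^ (-α) * (p.2 : ℝ) ^ (-β) *
        (if Nat.gcd p.1 p.2 ∣ n then (Nat.gcd p.1 p.2 : ℝ) else 0))
      = zr α * zr β / zr (α + β) * (∑' g : ℕ, if g ∣ n then (g : ℝ) ^ (-(α + β) + 1) else 0) := by
  classical
  have hα0 : (0:ℝ) < α := by linarith
  have hβ0 : (0:ℝ) < β := by linarith
  have hαβ : (1:ℝ) < α + β := by linarith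
  set w₁ : ℕ → ℝ := fun g => if g ∣ n then (g : ℝ) else 0 with hw₁
  set fc : ℕ × ℕ → ℝ :=
    fun r => if Nat.Coprime r.1 r.2 then (r.1 : ℝ) ^ (-α) * (r.2 : ℝ) ^ (-β) else 0 with hfc
  have hab_nonneg : ∀ p : ℕ × ℕ, 0 ≤ (p.1 : ℝ) ^ (-α) * (p.2 : ℝ) ^ (-β) := fun p =>
    mul_nonneg (Real.rpow_nonneg (Nat.cast_nonneg _) _) (Real.rpow_nonneg (Nat.cast_nonneg _) _)
  have hsum_ab : Summable (fun p : ℕ × ℕ => (p.1 : ℝ) ^ (-α) * (p.2 : ℝ) ^ (-β)) :=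
    (summable_rpow hα).mul_of_nonneg (summable_rpow hβ)
      (fun _ => Real.rpow_nonneg (Nat.cast_nonneg _) _)
      (fun _ => Real.rpow_nonneg (Nat.cast_nonneg _) _)
  have hfc_nonneg : ∀ r, 0 ≤ fc r := by
    intro r
    simp only [hfc]
    split
    · exact hab_nonneg r
    · exact le_refl 0
  have hsum_fc : Summable fc := by
    apply Summable.of_nonneg_of_le hfc_nonneg ?_ hsum_ab
    intro r
    simp only [hfc]
    split
    · exact le_refl _
    · exact hab_nonneg r
  have hw₁_le : ∀ g : ℕ, w₁ g ≤ (n : ℝ) := by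
    intro g
    simp only [hw₁]
    split
    · exact_mod_cast Nat.le_of_dvd hn ‹g ∣ n›
    · exact_mod_cast Nat.zero_le n
  have hw₁_nonneg : ∀ g : ℕ, 0 ≤ w₁ g := by
    intro g
    simp only [hw₁]
    split
    · exact Nat.cast_nonneg g
    · exact le_refl 0
  have hsum_fg1 : Summable (fun g : ℕ => (g : ℝ) ^ (-(α + β)) * w₁ g) := by
    apply Summable.of_nonneg_of_le
      (fun g => mul_nonneg (Real.rpow_nonneg (Nat.cast_nonneg _) _) (hw₁_nonneg g))
      (fun g => mul_le_mul_of_nonneg_left (hw₁_le g) (Real.rpow_nonneg (Nat.cast_nonneg _) _))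
      ((summable_rpow hαβ).mul_right (n : ℝ))
  -- the unrestricted identity: zr α * zr β = zr (α+β) * C
  have hC : zr α * zr β = zr (α + β) * (∑' r : ℕ × ℕ, fc r) := by
    have h0 : zr α * zr β = ∑' p : ℕ × ℕ, ((p.1 : ℝ) ^ (-α) * (p.2 : ℝ) ^ (-β)) :=
      (tsum_prod_mul _ _ (summable_rpow hα) (summable_rpow hβ)
        (fun _ => Real.rpow_nonneg (Nat.cast_nonneg _) _)
        (fun _ => Real.rpow_nonneg (Nat.cast_nonneg _) _)).symm
    set w₀ : ℕ → ℝ := fun g => if g = 0 then 0 else 1 with hw₀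
    have h1 : ∑' p : ℕ × ℕ, ((p.1 : ℝ) ^ (-α) * (p.2 : ℝ) ^ (-β))
        = ∑' p : ℕ × ℕ, ((p.1 : ℝ) ^ (-α) * (p.2 : ℝ) ^ (-β) * w₀ (Nat.gcd p.1 p.2)) := by
      apply tsum_congr
      rintro ⟨x, y⟩
      rcases Nat.eq_zero_or_pos x with rfl | hx
      · simp [Real.zero_rpow (by linarith : -α ≠ 0)]
      rcases Nat.eq_zero_or_pos y with rfl | hy
      · simp [Real.zero_rpow (by linarith : -β ≠ 0)]
      have : Nat.gcd x y ≠ 0 := (Nat.gcd_pos_of_pos_left y hx).ne'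
      simp [hw₀, this]
    have h2 : ∑' q : ℕ × ℕ × ℕ,
          (((q.1 : ℝ) ^ (-(α + β)) * w₀ q.1) * fc q.2)
        = ∑' q : ℕ × ℕ × ℕ, ((q.1 : ℝ) ^ (-(α + β)) * fc q.2) := by
      apply tsum_congr
      rintro ⟨g, r⟩
      rcases Nat.eq_zero_or_pos g with rfl | hg
      · rw [Nat.cast_zero, Real.zero_rpow (by linarith : -(α + β) ≠ 0)]
        simp
      · simp [hw₀, hg.ne']
    rw [h0, h1, key_reindex α β hα0 hβ0 w₀, h2,
      tsum_prod_mul (fun g : ℕ => (g : ℝ) ^ (-(α + β))) fc (summable_rpow hαβ) hsum_fc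
        (fun _ => Real.rpow_nonneg (Nat.cast_nonneg _) _) hfc_nonneg]
    rfl
  have hCval : (∑' r : ℕ × ℕ, fc r) = zr α * zr β / zr (α + β) := by
    rw [eq_div_iff (zr_pos hαβ).ne', hC]
    ring
  calc ∑' p : ℕ × ℕ, ((p.1 : ℝ) ^ (-α) * (p.2 : ℝ) ^ (-β) *
          (if Nat.gcd p.1 p.2 ∣ n then (Nat.gcd p.1 p.2 : ℝ) else 0))
      = ∑' q : ℕ × ℕ × ℕ, (((q.1 : ℝ) ^ (-(α + β)) * w₁ q.1) * fc q.2) :=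
        key_reindex α β hα0 hβ0 w₁
    _ = (∑' g : ℕ, (g : ℝ) ^ (-(α + β)) * w₁ g) * (∑' r : ℕ × ℕ, fc r) :=
        tsum_prod_mul _ _ hsum_fg1 hsum_fc
          (fun g => mul_nonneg (Real.rpow_nonneg (Nat.cast_nonneg _) _) (hw₁_nonneg g))
          hfc_nonneg
    _ = (∑' g : ℕ, if g ∣ n then (g : ℝ) ^ (-(α + β) + 1) else 0)
          * (zr α * zr β / zr (α + β)) := by
        rw [hCval]
        congr 1
        apply tsum_congr
        intro g
        by_cases hg : g ∣ n
        · have hg0 : 0 < g := Nat.pos_of_dvd_of_pos hg hn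
          have hg0' : ((g : ℝ)) ≠ 0 := by exact_mod_cast hg0.ne'
          simp only [hw₁, hg, if_true]
          rw [Real.rpow_add_one hg0' (-(α + β))]
        · simp [hw₁, hg]
    _ = zr α * zr β / zr (α + β)
          * (∑' g : ℕ, if g ∣ n then (g : ℝ) ^ (-(α + β) + 1) else 0) := by ring

lemma divisor_sum (c : ℝ) (n : ℕ) (hn : 0 < n) :
    (∑' g : ℕ, if g ∣ n then (g : ℝ) ^ (-c) else 0) = sigmaR c n / (n : ℝ) ^ c := by
  classical
  rw [tsum_eq_sum (s := n.divisors)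
    (by
      intro g hg
      rw [if_neg]
      intro hdvd
      exact hg (Nat.mem_divisors.mpr ⟨hdvd, hn.ne'⟩))]
  rw [Finset.sum_congr rfl (fun g hg => if_pos (Nat.mem_divisors.mp hg).1)]
  rw [← Nat.sum_div_divisors n (fun g => (g : ℝ) ^ (-c))]
  rw [sigmaR, Finset.sum_div]
  apply Finset.sum_congr rfl
  intro d hd
  have hdvd := (Nat.mem_divisors.mp hd).1
  have hd0 : 0 < d := Nat.pos_of_mem_divisors hd
  have hn0 : (0:ℝ) < n := by exact_mod_cast hn
  have hd0' : (0:ℝ) < d := by exact_mod_cast hd0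
  rw [Nat.cast_div hdvd (by exact_mod_cast hd0.ne' : ((d:ℝ) ≠ 0))]
  rw [Real.rpow_neg (by positivity), Real.div_rpow hn0.le hd0'.le, inv_div]


lemma hzeta_eq (a : ℝ) (ha : 0 < a) {d e : ℕ} (h1 : 1 ≤ e) (h2 : e ≤ d) :
    hzeta ((a : ℂ) + 1) ((e : ℝ) / d)
      = ((((∑' k : ℕ, ((k * d + e : ℕ) : ℝ) ^ (-(a + 1))) * (d : ℝ) ^ (a + 1) : ℝ)) : ℂ) := by
  have hd : 0 < d := lt_of_lt_of_le h1 h2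
  have hd0 : (0:ℝ) < d := by exact_mod_cast hd
  have hx : (e : ℝ) / d ∈ Set.Icc (0:ℝ) 1 := by
    constructor
    · positivity
    · rw [div_le_one hd0]
      exact_mod_cast h2
  have hs : 1 < Complex.re ((a : ℂ) + 1) := by
    simp only [Complex.add_re, Complex.ofReal_re, Complex.one_re]
    linarith
  have H := HurwitzZeta.hasSum_hurwitzZeta_of_one_lt_re hx hs
  have hsum : Summable (fun k : ℕ => ((k * d + e : ℕ) : ℝ) ^ (-(a + 1))) := by
    apply Summable.comp_injective (summable_rpow (by linarith : (1:ℝ) < a + 1))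
    intro k k' hk
    simp only at hk
    have : k * d = k' * d := by omega
    exact Nat.eq_of_mul_eq_mul_right hd this
  have hterm : ∀ k : ℕ, (1 / ((k : ℂ) + (((e : ℝ) / d : ℝ) : ℂ)) ^ ((a : ℂ) + 1))
      = ((((k * d + e : ℕ) : ℝ) ^ (-(a + 1)) * (d : ℝ) ^ (a + 1) : ℝ) : ℂ) := by
    intro k
    have hb0 : (0:ℝ) < (k : ℝ) + (e : ℝ) / d := by positivity
    have hcast : ((k : ℂ) + (((e : ℝ) / d : ℝ) : ℂ)) = ((((k : ℝ) + (e : ℝ) / d : ℝ)) : ℂ) := by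
      push_cast; ring
    have hexp : ((a : ℂ) + 1) = (((a + 1 : ℝ)) : ℂ) := by push_cast; ring
    rw [hcast, hexp, ← Complex.ofReal_cpow hb0.le, ← Complex.ofReal_one, ← Complex.ofReal_div]
    congr 1
    have hy : (k : ℝ) + (e : ℝ) / d = ((k * d + e : ℕ) : ℝ) / d := by
      push_cast
      field_simp
    rw [hy, Real.div_rpow (by positivity) hd0.le, one_div_div,
      Real.rpow_neg (by positivity), div_eq_mul_inv, mul_comm]
  have H2 : HasSum (fun k : ℕ => ((((k * d + e : ℕ) : ℝ) ^ (-(a + 1)) * (d : ℝ) ^ (a + 1) : ℝ) : ℂ))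
      (hzeta ((a : ℂ) + 1) ((e : ℝ) / d)) := by
    rw [hzeta]
    simp only [← hterm]
    exact H
  have hsum' := hsum.mul_right ((d : ℝ) ^ (a + 1))
  have hR : HasSum (fun k : ℕ => ((((k * d + e : ℕ) : ℝ) ^ (-(a + 1)) * (d : ℝ) ^ (a + 1) : ℝ) : ℂ))
      ((((∑' k : ℕ, ((k * d + e : ℕ) : ℝ) ^ (-(a + 1))) * (d : ℝ) ^ (a + 1) : ℝ)) : ℂ) := by
    rw [Complex.hasSum_ofReal]
    have h := hsum'.hasSum
    rwa [tsum_mul_right] at h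
  exact H2.unique hR

lemma sum_Icc_tsum {d : ℕ} (hd : 0 < d) (u : ℕ → ℝ) (hu : Summable u) (h0 : u 0 = 0) :
    ∑ e ∈ Finset.Icc 1 d, ∑' k : ℕ, u (k * d + e) = ∑' m : ℕ, u m := by
  classical
  haveI : NeZero d := ⟨hd.ne'⟩
  have hinj : ∀ r : ℕ, Function.Injective (fun k : ℕ => k * d + r) := by
    intro r k k' hk
    simp only at hk
    have : k * d = k' * d := by omega
    exact Nat.eq_of_mul_eq_mul_right hd this
  -- equivalence (Fin d × ℕ) ≃ ℕ : (r, k) ↦ k * d + r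
  set E : Fin d × ℕ ≃ ℕ := (Equiv.prodComm (Fin d) ℕ).trans (Nat.divModEquiv d).symm with hE
  have hEval : ∀ p : Fin d × ℕ, E p = p.2 * d + (p.1 : ℕ) := by
    rintro ⟨r, k⟩
    simp [hE, Nat.divModEquiv]
  have h1 : ∑' m : ℕ, u m = ∑' p : Fin d × ℕ, u (p.2 * d + (p.1 : ℕ)) := by
    rw [← E.tsum_eq u]
    exact tsum_congr fun p => by rw [hEval]
  have hsum2 : Summable (fun p : Fin d × ℕ => u (p.2 * d + (p.1 : ℕ))) := by
    have := (E.summable_iff (f := u)).mpr hu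
    apply this.congr
    intro p
    simp only [Function.comp_apply, hEval]
  have h2 : ∑' p : Fin d × ℕ, u (p.2 * d + (p.1 : ℕ))
      = ∑ r : Fin d, ∑' k : ℕ, u (k * d + (r : ℕ)) := by
    rw [Summable.tsum_prod' hsum2 (fun r => hu.comp_injective (hinj r))]
    exact tsum_fintype _
  have h3 : ∑ r : Fin d, ∑' k : ℕ, u (k * d + (r : ℕ))
      = ∑ r ∈ Finset.range d, ∑' k : ℕ, u (k * d + r) :=
    Fin.sum_univ_eq_sum_range (fun r => ∑' k : ℕ, u (k * d + r)) d
  -- shift the 0 residue class to d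
  have hV0 : ∑' k : ℕ, u (k * d + 0) = ∑' k : ℕ, u (k * d + d) := by
    have hs0 : Summable (fun k : ℕ => u (k * d + 0)) := hu.comp_injective (hinj 0)
    rw [Summable.tsum_eq_zero_add hs0]
    simp only [Nat.zero_mul, Nat.zero_add, h0]
    rw [zero_add]
    apply tsum_congr
    intro k
    congr 1
    ring
  have h4 : ∑ r ∈ Finset.range d, ∑' k : ℕ, u (k * d + r)
      = ∑ e ∈ Finset.Icc 1 d, ∑' k : ℕ, u (k * d + e) := by
    rw [Finset.range_eq_Ico, Finset.sum_eq_sum_Ico_succ_bot hd, hV0]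
    rw [← Finset.Ico_add_one_right_eq_Icc, Finset.sum_Ico_succ_top (by omega : 1 ≤ d)]
    ring
  rw [h1, h2, h3, h4]


lemma perd (a b : ℝ) (ha : 0 < a) (hb : 0 < b) (n : ℕ) (hn : 0 < n) (d : ℕ) :
    ((d : ℝ) ^ (-(a + b + 2)) : ℝ) *
        ∑ e ∈ (Finset.Icc 1 d ×ˢ Finset.Icc 1 d).filter
            (fun e : ℕ × ℕ => e.1 * e.2 ≡ n [MOD d]),
          hzeta ((a : ℂ) + 1) ((e.2 : ℝ) / d)
      = ((∑' m : ℕ, ((d : ℝ) ^ (-(b + 1)) * (m : ℝ) ^ (-(a + 1)) *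
            (if Nat.gcd d m ∣ n then (Nat.gcd d m : ℝ) else 0)) : ℝ) : ℂ) := by
  classical
  rcases Nat.eq_zero_or_pos d with rfl | hd
  · have h2 : ((0:ℕ):ℝ) ^ (-(b+1)) = 0 := by
      rw [Nat.cast_zero]; exact Real.zero_rpow (by linarith)
    have hIcc : (Finset.Icc 1 0 : Finset ℕ) = ∅ := by simp
    rw [hIcc]
    simp only [Finset.empty_product, Finset.filter_empty, Finset.sum_empty, mul_zero]
    symm
    rw [Complex.ofReal_eq_zero]
    have hz : ∀ m : ℕ, ((0:ℕ):ℝ) ^ (-(b+1)) * (m:ℝ) ^ (-(a+1)) *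
        (if Nat.gcd 0 m ∣ n then (Nat.gcd 0 m : ℝ) else 0) = 0 := fun m => by
      rw [h2, zero_mul, zero_mul]
    rw [tsum_congr hz, tsum_zero]
  have hd0 : (0:ℝ) < d := by exact_mod_cast hd
  -- Step 1: group the pair sum by the second coordinate
  have step1 : ∑ e ∈ (Finset.Icc 1 d ×ˢ Finset.Icc 1 d).filter
        (fun e : ℕ × ℕ => e.1 * e.2 ≡ n [MOD d]), hzeta ((a : ℂ) + 1) ((e.2 : ℝ) / d)
      = ∑ e₂ ∈ Finset.Icc 1 d,
          (((Finset.Icc 1 d).filter (fun e₁ => e₁ * e₂ ≡ n [MOD d])).card : ℂ) *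
            hzeta ((a : ℂ) + 1) ((e₂ : ℝ) / d) := by
    rw [Finset.sum_filter, Finset.sum_product_right]
    apply Finset.sum_congr rfl
    intro e₂ _
    simp only
    rw [← Finset.sum_filter, Finset.sum_const, nsmul_eq_mul]
  have step2 : ∀ e₂ ∈ Finset.Icc 1 d,
      (((Finset.Icc 1 d).filter (fun e₁ => e₁ * e₂ ≡ n [MOD d])).card : ℂ) *
          hzeta ((a : ℂ) + 1) ((e₂ : ℝ) / d)
        = ((((if Nat.gcd e₂ d ∣ n then (Nat.gcd e₂ d : ℝ) else 0) *
            ((∑' k : ℕ, ((k * d + e₂ : ℕ) : ℝ) ^ (-(a + 1))) * (d : ℝ) ^ (a + 1)) : ℝ)) : ℂ) := by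
    intro e₂ he₂
    rw [Finset.mem_Icc] at he₂
    rw [count_solutions n d e₂ hd, hzeta_eq a ha he₂.1 he₂.2]
    split_ifs with h
    · push_cast
      ring
    · simp
  rw [step1, Finset.sum_congr rfl step2, ← Complex.ofReal_sum, ← Complex.ofReal_mul]
  congr 1
  -- now a purely real identity
  set u : ℕ → ℝ :=
    fun m => (m : ℝ) ^ (-(a + 1)) * (if Nat.gcd m d ∣ n then (Nat.gcd m d : ℝ) else 0) with hu
  have hu_nonneg : ∀ m, 0 ≤ u m := by
    intro m
    apply mul_nonneg (Real.rpow_nonneg (Nat.cast_nonneg _) _)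
    split
    · exact Nat.cast_nonneg _
    · exact le_refl 0
  have husum : Summable u := by
    apply Summable.of_nonneg_of_le hu_nonneg ?_
      ((summable_rpow (by linarith : (1:ℝ) < a + 1)).mul_right (d : ℝ))
    intro m
    apply mul_le_mul_of_nonneg_left ?_ (Real.rpow_nonneg (Nat.cast_nonneg _) _)
    split
    · exact_mod_cast Nat.gcd_le_right m hd
    · exact Nat.cast_nonneg d
  have h0 : u 0 = 0 := by
    simp only [hu]
    rw [Nat.cast_zero, Real.zero_rpow (show -(a+1) ≠ 0 by linarith), zero_mul]
  have hper : ∀ k e₂ : ℕ, Nat.gcd (k * d + e₂) d = Nat.gcd e₂ d := by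
    intro k e₂
    rw [show k * d + e₂ = e₂ + k * d by ring]
    exact Nat.gcd_add_mul_right_left d e₂ k
  have inner : ∀ e₂ : ℕ, ∑' k : ℕ, u (k * d + e₂)
      = (∑' k : ℕ, ((k * d + e₂ : ℕ) : ℝ) ^ (-(a + 1))) *
          (if Nat.gcd e₂ d ∣ n then (Nat.gcd e₂ d : ℝ) else 0) := by
    intro e₂
    rw [← tsum_mul_right]
    apply tsum_congr
    intro k
    simp only [hu, hper k e₂]
  have hpow : (d : ℝ) ^ (-(a + b + 2)) * (d : ℝ) ^ (a + 1) = (d : ℝ) ^ (-(b + 1)) := by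
    rw [← Real.rpow_add hd0]
    congr 1
    ring
  calc (d : ℝ) ^ (-(a + b + 2)) * ∑ e₂ ∈ Finset.Icc 1 d,
          ((if Nat.gcd e₂ d ∣ n then (Nat.gcd e₂ d : ℝ) else 0) *
            ((∑' k : ℕ, ((k * d + e₂ : ℕ) : ℝ) ^ (-(a + 1))) * (d : ℝ) ^ (a + 1)))
      = (d : ℝ) ^ (-(b + 1)) * ∑ e₂ ∈ Finset.Icc 1 d, ∑' k : ℕ, u (k * d + e₂) := by
        rw [Finset.sum_congr rfl (fun e₂ _ => by rw [inner e₂]; ring :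
          ∀ e₂ ∈ Finset.Icc 1 d,
            ((if Nat.gcd e₂ d ∣ n then (Nat.gcd e₂ d : ℝ) else 0) *
              ((∑' k : ℕ, ((k * d + e₂ : ℕ) : ℝ) ^ (-(a + 1))) * (d : ℝ) ^ (a + 1)))
            = (∑' k : ℕ, u (k * d + e₂)) * (d : ℝ) ^ (a + 1))]
        rw [← Finset.sum_mul, ← hpow]
        ring
    _ = (d : ℝ) ^ (-(b + 1)) * ∑' m : ℕ, u m := by rw [sum_Icc_tsum hd u husum h0]
    _ = ∑' m : ℕ, ((d : ℝ) ^ (-(b + 1)) * (m : ℝ) ^ (-(a + 1)) *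
          (if Nat.gcd d m ∣ n then (Nat.gcd d m : ℝ) else 0)) := by
        rw [← tsum_mul_left]
        apply tsum_congr
        intro m
        simp only [hu, Nat.gcd_comm d m]
        ring


end Stmt8Aux

open Stmt8Aux in
theorem stmt8 (a b : ℝ) (ha : 0 < a) (hb : 0 < b) (n : ℕ) (hn : 0 < n) :
    Summable (fun d : ℕ =>
      ‖((d : ℝ) ^ (-(a + b + 2)) : ℝ) *
          ∑ e ∈ (Finset.Icc 1 d ×ˢ Finset.Icc 1 d).filter
              (fun e : ℕ × ℕ => e.1 * e.2 ≡ n [MOD d]),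
            hzeta ((a : ℂ) + 1) ((e.2 : ℝ) / d)‖) ∧
    (∑' d : ℕ,
        ((d : ℝ) ^ (-(a + b + 2)) : ℝ) *
          ∑ e ∈ (Finset.Icc 1 d ×ˢ Finset.Icc 1 d).filter
              (fun e : ℕ × ℕ => e.1 * e.2 ≡ n [MOD d]),
            hzeta ((a : ℂ) + 1) ((e.2 : ℝ) / d))
      = riemannZeta ((a : ℂ) + 1) * riemannZeta ((b : ℂ) + 1) / riemannZeta ((a : ℂ) + b + 2)
          * (sigmaR (a + b + 1) n : ℂ) / ((n : ℝ) ^ (a + b + 1) : ℝ) := by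
  classical
  have ha1 : (1:ℝ) < a + 1 := by linarith
  have hb1 : (1:ℝ) < b + 1 := by linarith
  set G : ℕ × ℕ → ℝ := fun p => (p.1 : ℝ) ^ (-(b + 1)) * (p.2 : ℝ) ^ (-(a + 1)) *
      (if Nat.gcd p.1 p.2 ∣ n then (Nat.gcd p.1 p.2 : ℝ) else 0) with hG
  have hG_nonneg : ∀ p, 0 ≤ G p := by
    intro p
    apply mul_nonneg (mul_nonneg (Real.rpow_nonneg (Nat.cast_nonneg _) _)
      (Real.rpow_nonneg (Nat.cast_nonneg _) _))
    split
    · exact Nat.cast_nonneg _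
    · exact le_refl 0
  have hG_sum : Summable G := by
    apply Summable.of_nonneg_of_le hG_nonneg ?_
      (Summable.mul_right (n : ℝ)
        ((summable_rpow hb1).mul_of_nonneg (summable_rpow ha1)
          (fun _ => Real.rpow_nonneg (Nat.cast_nonneg _) _)
          (fun _ => Real.rpow_nonneg (Nat.cast_nonneg _) _)))
    intro p
    apply mul_le_mul_of_nonneg_left ?_
      (mul_nonneg (Real.rpow_nonneg (Nat.cast_nonneg _) _)
        (Real.rpow_nonneg (Nat.cast_nonneg _) _))
    split
    · exact_mod_cast Nat.le_of_dvd hn ‹_›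
    · exact Nat.cast_nonneg n
  have hGd : ∀ d : ℕ, Summable (fun m => G (d, m)) := fun d => hG_sum.prod_factor d
  set F : ℕ → ℝ := fun d => ∑' m, G (d, m) with hF
  have hFsum_hs : HasSum F (∑' p, G p) :=
    hG_sum.hasSum.prod_fiberwise (fun d => (hGd d).hasSum)
  have hFsum : Summable F := ⟨_, hFsum_hs⟩
  have hF_eq : ∀ d : ℕ, ((d : ℝ) ^ (-(a + b + 2)) : ℝ) *
      ∑ e ∈ (Finset.Icc 1 d ×ˢ Finset.Icc 1 d).filter
          (fun e : ℕ × ℕ => e.1 * e.2 ≡ n [MOD d]),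
        hzeta ((a : ℂ) + 1) ((e.2 : ℝ) / d) = ((F d : ℝ) : ℂ) := by
    intro d
    exact perd a b ha hb n hn d
  have hF_nonneg : ∀ d, 0 ≤ F d := fun d => tsum_nonneg fun m => hG_nonneg (d, m)
  constructor
  · apply hFsum.congr
    intro d
    rw [hF_eq d, Complex.norm_real, Real.norm_eq_abs, abs_of_nonneg (hF_nonneg d)]
  · rw [tsum_congr hF_eq, ← Complex.ofReal_tsum]
    have htsum : (∑' d : ℕ, F d) = ∑' p : ℕ × ℕ, G p := hFsum_hs.tsum_eq
    rw [htsum, master (b + 1) (a + 1) hb1 ha1 n hn]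
    have hdiv : (∑' g : ℕ, if g ∣ n then (g : ℝ) ^ (-((b + 1) + (a + 1)) + 1) else 0)
        = sigmaR (a + b + 1) n / (n : ℝ) ^ (a + b + 1) := by
      rw [show -((b + 1) + (a + 1)) + 1 = -(a + b + 1) by ring]
      exact divisor_sum (a + b + 1) n hn
    rw [hdiv, show (b + 1) + (a + 1) = a + b + 2 by ring]
    rw [show ((a : ℂ) + 1) = (((a + 1 : ℝ)) : ℂ) by push_cast; ring,
      show ((b : ℂ) + 1) = (((b + 1 : ℝ)) : ℂ) by push_cast; ring,
      show ((a : ℂ) + (b : ℝ) + 2) = (((a + b + 2 : ℝ)) : ℂ) by push_cast; ring,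
      zeta_eq_zr ha1, zeta_eq_zr hb1, zeta_eq_zr (show (1:ℝ) < a + b + 2 by linarith)]
    push_cast
    ring
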